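/- For every integer n ≥ 2: (1) a_{1,2}(2n) = b_{1,2}(2n) = b_{2,2}(2n−1); (2) a_{2,1}(2n) = c_{1,1}(2n) = c_{2,1}(2n−1); (3) a_{2,2}(2n) = a_{1,2}(2n+1) = c_{1,2}(2n) = b_{2,2}(2n); (4) a_{1,1}(2n+1) = b_{1,1}(2n+1) = b_{2,1}(2n); (5) a_{2,1}(2n+1) = a_{1,1}(2n+2) = b_{2,1}(2n+1) = c_{1,1}(2n+1); (6) a_{2,2}(2n+1) = c_{1,2}(2n+1) = c_{2,2}(2n). -/

import Mathlib

/-- The 16-letter alphabet 𝒜 = {A,…,P}. -/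
inductive A16 : Type
  | A | B | C | D | E | F | G | H | I | J | K | L | M | N | O | P
  deriving DecidableEq

/-- The 2×2 block substitution μ on 𝒜 (rows top to bottom). -/
def mu : A16 → Fin 2 → Fin 2 → A16
  | .A => ![![.A, .F], ![.G, .C]]
  | .B => ![![.A, .F], ![.H, .D]]
  | .C => ![![.B, .E], ![.G, .C]]
  | .D => ![![.B, .E], ![.H, .D]]
  | .E => ![![.A, .N], ![.G, .K]]
  | .F => ![![.A, .N], ![.H, .L]]
  | .G => ![![.B, .M], ![.G, .K]]
  | .H => ![![.B, .M], ![.H, .L]]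
  | .I => ![![.I, .F], ![.O, .C]]
  | .J => ![![.I, .F], ![.P, .D]]
  | .K => ![![.J, .E], ![.O, .C]]
  | .L => ![![.J, .E], ![.P, .D]]
  | .M => ![![.I, .N], ![.O, .K]]
  | .N => ![![.I, .N], ![.P, .L]]
  | .O => ![![.J, .M], ![.O, .K]]
  | .P => ![![.J, .M], ![.P, .L]]

/-- Entry version of μ, indexed by arbitrary naturals (via mod 2). -/
def muE (x : A16) (r c : ℕ) : A16 :=
  mu x ⟨r % 2, by omega⟩ ⟨c % 2, by omega⟩

/-- `superE n x` is the supertile μⁿ(x), a 2ⁿ×2ⁿ array over 𝒜,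
given as a total function on ℕ × ℕ (only indices < 2ⁿ are relevant). -/
def superE : ℕ → A16 → ℕ → ℕ → A16
  | 0, x, _, _ => x
  | n + 1, x, r, c => muE (superE n x (r / 2) (c / 2)) r c

/-- The supertile T_k = μᵏ(N). -/
def Tfun (k : ℕ) : ℕ → ℕ → A16 := superE k .N

/-- An m×n pattern over the alphabet α. -/
abbrev Pat (α : Type) (m n : ℕ) := Fin m → Fin n → α

/-- The set of m×n patterns occurring in the size×size array X. -/
def patIn {α : Type} (X : ℕ → ℕ → α) (size m n : ℕ) : Set (Pat α m n) :=
  { p | ∃ r c : ℕ, r + m ≤ size ∧ c + n ≤ size ∧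
      ∀ (i : Fin m) (j : Fin n), p i j = X (r + i) (c + j) }

/-- P(T, m×n) = ⋃ₖ P(T_k, m×n). -/
def PT (m n : ℕ) : Set (Pat A16 m n) := ⋃ k : ℕ, patIn (Tfun k) (2 ^ k) m n

/-- μ applied to an m×n pattern, as a total 2m×2n array on ℕ × ℕ
(indices are reduced mod the valid range; in range this is exactly μ(p)). -/
def muPatE {m n : ℕ} (p : Pat A16 m n) (r c : ℕ) : A16 :=
  if hm : 0 < m then
    if hn : 0 < n then
      muE (p ⟨r / 2 % m, Nat.mod_lt _ hm⟩ ⟨c / 2 % n, Nat.mod_lt _ hn⟩) r c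
    else .A
  else .A

/-- μ² applied to an m×n pattern, as a total 4m×4n array on ℕ × ℕ. -/
def mu2PatE {m n : ℕ} (p : Pat A16 m n) (r c : ℕ) : A16 :=
  muE (muPatE p (r / 2) (c / 2)) r c

/-- P_{i,j}(T, m×n) = { μ(x)[i,j,m×n] : x ∈ P(T,m×n) } (1-based corner (i,j)). -/
def Pij (i j m n : ℕ) : Set (Pat A16 m n) :=
  { q | ∃ x ∈ PT m n, ∀ (a : Fin m) (b : Fin n),
      q a b = muPatE x (i - 1 + a) (j - 1 + b) }

/-- Q_{i,j}(T, m×n) = { μ²(x)[i,j,m×n] : x ∈ P(T,m×n) } (1-based corner (i,j)). -/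
def Qij (i j m n : ℕ) : Set (Pat A16 m n) :=
  { q | ∃ x ∈ PT m n, ∀ (a : Fin m) (b : Fin n),
      q a b = mu2PatE x (i - 1 + a) (j - 1 + b) }

/-- The 2×2 block substitution φ from 𝒜 to ℬ = {0,1,2,3}. -/
def phi : A16 → Fin 2 → Fin 2 → Fin 4
  | .A => ![![0, 1], ![0, 0]]
  | .B => ![![0, 1], ![1, 1]]
  | .C => ![![1, 0], ![0, 0]]
  | .D => ![![1, 0], ![1, 1]]
  | .E => ![![0, 3], ![0, 2]]
  | .F => ![![0, 3], ![1, 3]]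
  | .G => ![![1, 2], ![0, 2]]
  | .H => ![![1, 2], ![1, 3]]
  | .I => ![![2, 1], ![2, 0]]
  | .J => ![![2, 1], ![3, 1]]
  | .K => ![![3, 0], ![2, 0]]
  | .L => ![![3, 0], ![3, 1]]
  | .M => ![![2, 3], ![2, 2]]
  | .N => ![![2, 3], ![3, 3]]
  | .O => ![![3, 2], ![2, 2]]
  | .P => ![![3, 2], ![3, 3]]

/-- Entry version of φ, indexed by arbitrary naturals (via mod 2). -/
def phiE (x : A16) (r c : ℕ) : Fin 4 :=
  phi x ⟨r % 2, by omega⟩ ⟨c % 2, by omega⟩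

/-- φ applied to an m×n pattern over 𝒜, as a total 2m×2n array on ℕ × ℕ. -/
def phiPatE {m n : ℕ} (p : Pat A16 m n) (r c : ℕ) : Fin 4 :=
  if hm : 0 < m then
    if hn : 0 < n then
      phiE (p ⟨r / 2 % m, Nat.mod_lt _ hm⟩ ⟨c / 2 % n, Nat.mod_lt _ hn⟩) r c
    else 0
  else 0

/-- φ(T_k), a 2^(k+1)×2^(k+1) array over ℬ. -/
def Sfun (k : ℕ) (r c : ℕ) : Fin 4 := phiE (Tfun k (r / 2) (c / 2)) r c

/-- P(S, m×n) = ⋃_{k≥1} P(φ(T_{k-1}), m×n). -/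
def PS (m n : ℕ) : Set (Pat (Fin 4) m n) :=
  ⋃ k : ℕ, patIn (Sfun k) (2 ^ (k + 1)) m n

/-- P_{i,j}(S, m×n) = { φ(x)[i,j,m×n] : x ∈ P(T,m×n) } (1-based corner (i,j)). -/
def PSij (i j m n : ℕ) : Set (Pat (Fin 4) m n) :=
  { q | ∃ x ∈ PT m n, ∀ (a : Fin m) (b : Fin n),
      q a b = phiPatE x (i - 1 + a) (j - 1 + b) }

/-- A_n = |P(S, n×n)|. -/
noncomputable def Acnt (n : ℕ) : ℕ := Nat.card (PS n n)

/-- a_{i,j}(n) = |P_{i,j}(T, n×n)|. -/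
noncomputable def aT (i j n : ℕ) : ℕ := Nat.card (Pij i j n n)

/-- b_{i,j}(n) = |P_{i,j}(T, n×(n+1))|. -/
noncomputable def bT (i j n : ℕ) : ℕ := Nat.card (Pij i j n (n + 1))

/-- c_{i,j}(n) = |P_{i,j}(T, (n+1)×n)|. -/
noncomputable def cT (i j n : ℕ) : ℕ := Nat.card (Pij i j (n + 1) n)

instance : Fintype A16 where
  elems := ⟨↑[A16.A, A16.B, A16.C, A16.D, A16.E, A16.F, A16.G, A16.H, A16.I, A16.J, A16.K,
    A16.L, A16.M, A16.N, A16.O, A16.P], by decide⟩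
  complete := by intro x; cases x <;> decide

/-- Row class: 0 for letters appearing in top rows of μ-blocks. -/
def rcl : A16 → ℕ
  | .A | .B | .E | .F | .I | .J | .M | .N => 0
  | _ => 1

/-- Column class: 0 for letters appearing in left columns of μ-blocks. -/
def ccl : A16 → ℕ
  | .A | .B | .G | .H | .I | .J | .O | .P => 0
  | _ => 1

lemma rcl_mu : ∀ (u : A16) (i j : Fin 2), rcl (mu u i j) = i.val := by decide
lemma ccl_mu : ∀ (u : A16) (i j : Fin 2), ccl (mu u i j) = j.val := by decide

lemma mu_inj : ∀ u v : A16, mu u 0 0 = mu v 0 0 → mu u 0 1 = mu v 0 1 →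
    mu u 1 0 = mu v 1 0 → mu u 1 1 = mu v 1 1 → u = v := by decide

lemma detP2 : ∀ u v : A16, mu u 1 0 = mu v 1 0 → rcl u = rcl v → ccl u = ccl v → u = v := by
  decide

lemma detP1 : ∀ u v : A16, mu u 0 0 = mu v 0 0 → rcl u = rcl v → ccl u = ccl v →
    mu u 0 1 = mu v 0 1 := by decide

lemma detP4 : ∀ u v : A16, mu u 1 1 = mu v 1 1 → rcl u = rcl v → ccl u = ccl v →
    mu u 0 1 = mu v 0 1 := by decide

lemma superE_zero (x : A16) (r c : ℕ) : superE 0 x r c = x := rfl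

lemma superE_succ (n : ℕ) (x : A16) (r c : ℕ) :
    superE (n+1) x r c = muE (superE n x (r / 2) (c / 2)) r c := rfl

lemma muE_congr {u : A16} {r c r' c' : ℕ} (h1 : r % 2 = r' % 2) (h2 : c % 2 = c' % 2) :
    muE u r c = muE u r' c' := by
  unfold muE; simp only [h1, h2]

lemma superE_add (k j : ℕ) (x : A16) (r c : ℕ) :
    superE (k + j) x r c = superE k (superE j x (r / 2 ^ k) (c / 2 ^ k)) r c := by
  induction k generalizing r c with
  | zero => simp [superE]
  | succ k ih =>
      have h : k + 1 + j = (k + j) + 1 := by omega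
      rw [h, superE_succ, ih, superE_succ]
      rw [Nat.div_div_eq_div_mul, Nat.div_div_eq_div_mul]
      ring_nf

lemma superE_shift (k : ℕ) (x : A16) (r c s t : ℕ) :
    superE k x (r + s * 2 ^ k) (c + t * 2 ^ k) = superE k x r c := by
  induction k generalizing r c s t with
  | zero => rfl
  | succ k ih =>
      rw [superE_succ, superE_succ]
      have hr : (r + s * 2 ^ (k+1)) / 2 = r / 2 + s * 2 ^ k := by
        have : s * 2 ^ (k+1) = (s * 2 ^ k) * 2 := by ring
        rw [this, Nat.add_mul_div_right _ _ (by norm_num : (0:ℕ) < 2)]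
      have hc : (c + t * 2 ^ (k+1)) / 2 = c / 2 + t * 2 ^ k := by
        have : t * 2 ^ (k+1) = (t * 2 ^ k) * 2 := by ring
        rw [this, Nat.add_mul_div_right _ _ (by norm_num : (0:ℕ) < 2)]
      rw [hr, hc, ih]
      apply muE_congr
      · have h : s * 2 ^ (k+1) = (s * 2 ^ k) * 2 := by ring
        omega
      · have h : t * 2 ^ (k+1) = (t * 2 ^ k) * 2 := by ring
        omega
lemma superE3_N : superE 3 A16.N 4 3 = A16.N := by decide

lemma Tfun_succ (k r c : ℕ) : Tfun (k+1) r c = muE (Tfun k (r / 2) (c / 2)) r c := rfl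

lemma Tfun_embed (k r c : ℕ) (hr : r < 2 ^ k) (hc : c < 2 ^ k) :
    Tfun (k + 3) (4 * 2 ^ k + r) (3 * 2 ^ k + c) = Tfun k r c := by
  unfold Tfun
  rw [superE_add k 3]
  have hpos : 0 < 2 ^ k := Nat.pow_pos (by norm_num)
  have h1 : (4 * 2 ^ k + r) / 2 ^ k = 4 := by
    rw [Nat.add_comm, Nat.add_mul_div_right _ _ hpos, Nat.div_eq_of_lt hr]
  have h2 : (3 * 2 ^ k + c) / 2 ^ k = 3 := by
    rw [Nat.add_comm, Nat.add_mul_div_right _ _ hpos, Nat.div_eq_of_lt hc]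
  rw [h1, h2, superE3_N]
  rw [Nat.add_comm (4 * 2 ^ k) r, Nat.add_comm (3 * 2 ^ k) c]
  exact superE_shift k A16.N r c 4 3

lemma mem_PT {m n : ℕ} {y : Pat A16 m n} :
    y ∈ PT m n ↔ ∃ k r c : ℕ, r + m ≤ 2 ^ k ∧ c + n ≤ 2 ^ k ∧
      ∀ (i : Fin m) (j : Fin n), y i j = Tfun k (r + i) (c + j) := by
  unfold PT patIn
  simp only [Set.mem_iUnion, Set.mem_setOf_eq]

lemma PT_margin {m n : ℕ} {y : Pat A16 m n} (hy : y ∈ PT m n) (d : ℕ) :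
    ∃ k r c : ℕ, r + m + d ≤ 2 ^ k ∧ c + n + d ≤ 2 ^ k ∧
      ∀ (i : Fin m) (j : Fin n), y i j = Tfun k (r + i) (c + j) := by
  induction d with
  | zero =>
      obtain ⟨k, r, c, h1, h2, h3⟩ := mem_PT.mp hy
      exact ⟨k, r, c, by omega, by omega, h3⟩
  | succ d ih =>
      obtain ⟨k, r, c, h1, h2, h3⟩ := ih
      have hp : 1 ≤ 2 ^ k := Nat.one_le_two_pow
      have hp8 : 2 ^ (k + 3) = 8 * 2 ^ k := by ring
      refine ⟨k + 3, 4 * 2 ^ k + r, 3 * 2 ^ k + c, by omega, by omega, fun i j => ?_⟩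
      have hri : r + i < 2 ^ k := by omega
      have hcj : c + j < 2 ^ k := by omega
      have := Tfun_embed k (r + i) (c + j) hri hcj
      rw [h3 i j, ← this]
      congr 1 <;> omega

lemma PT_extend {m n M N : ℕ} (hM : m ≤ M) (hN : n ≤ N) {y : Pat A16 m n} (hy : y ∈ PT m n) :
    ∃ x ∈ PT M N, ∀ (i : Fin m) (j : Fin n),
      x ⟨i, lt_of_lt_of_le i.2 hM⟩ ⟨j, lt_of_lt_of_le j.2 hN⟩ = y i j := by
  obtain ⟨k, r, c, h1, h2, h3⟩ := PT_margin hy (max (M - m) (N - n))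
  refine ⟨fun a b => Tfun k (r + a) (c + b), ?_, fun i j => (h3 i j).symm⟩
  exact mem_PT.mpr ⟨k, r, c, by omega, by omega, fun i j => rfl⟩

lemma PT_sub {m n m₀ n₀ : ℕ} (hm : m₀ ≤ m) (hn : n₀ ≤ n) {x : Pat A16 m n} (hx : x ∈ PT m n) :
    (fun (a : Fin m₀) (b : Fin n₀) =>
      x ⟨a, lt_of_lt_of_le a.2 hm⟩ ⟨b, lt_of_lt_of_le b.2 hn⟩) ∈ PT m₀ n₀ := by
  obtain ⟨k, r, c, h1, h2, h3⟩ := mem_PT.mp hx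
  exact mem_PT.mpr ⟨k, r, c, by omega, by omega, fun i j => h3 _ _⟩

lemma muPatE_eq {m n : ℕ} (p : Pat A16 m n) {r c : ℕ} (hr : r / 2 < m) (hc : c / 2 < n) :
    muPatE p r c = mu (p ⟨r / 2, hr⟩ ⟨c / 2, hc⟩) ⟨r % 2, by omega⟩ ⟨c % 2, by omega⟩ := by
  have hm : 0 < m := by omega
  have hn : 0 < n := by omega
  unfold muPatE muE
  rw [dif_pos hm, dif_pos hn]
  congr 2 <;> simp [Nat.mod_eq_of_lt, hr, hc]

lemma class_formula {m n : ℕ} (hm : 2 ≤ m) {y : Pat A16 m n} (hy : y ∈ PT m n) :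
    ∃ ρ γ : ℕ, ∀ (i : Fin m) (j : Fin n),
      rcl (y i j) = (ρ + i) % 2 ∧ ccl (y i j) = (γ + j) % 2 := by
  obtain ⟨k, r, c, h1, h2, h3⟩ := mem_PT.mp hy
  match k with
  | 0 => exfalso; simp at h1; omega
  | k + 1 =>
      refine ⟨r, c, fun i j => ?_⟩
      rw [h3 i j, Tfun_succ]
      unfold muE
      constructor
      · rw [rcl_mu]
      · rw [ccl_mu]
lemma mu_inj' : ∀ u v : A16, (∀ δ ε : Fin 2, mu u δ ε = mu v δ ε) → u = v := by decide

lemma detP2' : ∀ u v : A16,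
    mu u ⟨1, by omega⟩ ⟨0, by omega⟩ = mu v ⟨1, by omega⟩ ⟨0, by omega⟩ →
    rcl u = rcl v → ccl u = ccl v → u = v := by decide

lemma detP1' : ∀ u v : A16,
    mu u ⟨0, by omega⟩ ⟨0, by omega⟩ = mu v ⟨0, by omega⟩ ⟨0, by omega⟩ →
    rcl u = rcl v → ccl u = ccl v →
    mu u ⟨0, by omega⟩ ⟨1, by omega⟩ = mu v ⟨0, by omega⟩ ⟨1, by omega⟩ := by decide

lemma detP4' : ∀ u v : A16,
    mu u ⟨1, by omega⟩ ⟨1, by omega⟩ = mu v ⟨1, by omega⟩ ⟨1, by omega⟩ →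
    rcl u = rcl v → ccl u = ccl v →
    mu u ⟨0, by omega⟩ ⟨1, by omega⟩ = mu v ⟨0, by omega⟩ ⟨1, by omega⟩ := by decide

lemma master {m₀ n₀ : ℕ} (hm : 2 ≤ m₀) (hn : 2 ≤ n₀) {c₀ R : ℕ}
    (hc : c₀ ≤ 1) (hR3 : 3 ≤ R) (hRm : R ≤ 2 * m₀ - 1)
    (hanchor : c₀ = 0 ∨ 3 ≤ n₀)
    {y y' : Pat A16 m₀ n₀} (hy : y ∈ PT m₀ n₀) (hy' : y' ∈ PT m₀ n₀)
    (hag : ∀ r c : ℕ, 1 ≤ r → r ≤ R → c₀ ≤ c → c ≤ 2 * n₀ - 2 →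
      muPatE y r c = muPatE y' r c) :
    ∀ r c : ℕ, r ≤ R → c₀ ≤ c → c ≤ 2 * n₀ - 1 → muPatE y r c = muPatE y' r c := by
  obtain ⟨ρ, γ, hcf⟩ := class_formula hm hy
  obtain ⟨ρ', γ', hcf'⟩ := class_formula hm hy'
  have hmu : ∀ (i j δ ε : ℕ) (hi : i < m₀) (hj : j < n₀) (hδ : δ < 2) (hε : ε < 2),
      1 ≤ 2*i+δ → 2*i+δ ≤ R → c₀ ≤ 2*j+ε → 2*j+ε ≤ 2*n₀-2 →
      mu (y ⟨i, hi⟩ ⟨j, hj⟩) ⟨δ, hδ⟩ ⟨ε, hε⟩ = mu (y' ⟨i, hi⟩ ⟨j, hj⟩) ⟨δ, hδ⟩ ⟨ε, hε⟩ := by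
    intro i j δ ε hi hj hδ hε h1 h2 h3 h4
    have h := hag (2*i+δ) (2*j+ε) h1 h2 h3 h4
    have hr2 : (2*i+δ)/2 < m₀ := by omega
    have hc2 : (2*j+ε)/2 < n₀ := by omega
    rw [muPatE_eq y hr2 hc2, muPatE_eq y' hr2 hc2] at h
    have e1 : (2*i+δ)/2 = i := by omega
    have e2 : (2*j+ε)/2 = j := by omega
    have e3 : (2*i+δ)%2 = δ := by omega
    have e4 : (2*j+ε)%2 = ε := by omega
    simp only [e1, e2, e3, e4] at h
    exact h
  have hcn : c₀ < n₀ := by omega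
  have hanch : y ⟨1, by omega⟩ ⟨c₀, hcn⟩ = y' ⟨1, by omega⟩ ⟨c₀, hcn⟩ := by
    have hcol : 2*c₀+1 ≤ 2*n₀-2 := by rcases hanchor with h | h <;> omega
    apply mu_inj'
    intro δ ε
    have hδ := δ.isLt
    have hε := ε.isLt
    have := hmu 1 c₀ δ.val ε.val (by omega) hcn hδ hε (by omega) (by omega) (by omega)
      (by omega)
    exact this
  have hrc : ∀ (i : Fin m₀) (j : Fin n₀), rcl (y i j) = rcl (y' i j) := by
    intro i j
    have h1 := (hcf ⟨1, by omega⟩ ⟨c₀, hcn⟩).1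
    have h1' := (hcf' ⟨1, by omega⟩ ⟨c₀, hcn⟩).1
    rw [hanch] at h1
    rw [(hcf i j).1, (hcf' i j).1]
    omega
  have hccl : ∀ (i : Fin m₀) (j : Fin n₀), ccl (y i j) = ccl (y' i j) := by
    intro i j
    have h1 := (hcf ⟨1, by omega⟩ ⟨c₀, hcn⟩).2
    have h1' := (hcf' ⟨1, by omega⟩ ⟨c₀, hcn⟩).2
    rw [hanch] at h1
    rw [(hcf i j).2, (hcf' i j).2]
    omega
  have hlet : ∀ (i j : ℕ) (hi : i < m₀) (hj : j < n₀), 2*i+1 ≤ R → c₀ ≤ 2*j →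
      y ⟨i, hi⟩ ⟨j, hj⟩ = y' ⟨i, hi⟩ ⟨j, hj⟩ := by
    intro i j hi hj h1 h2
    exact detP2' _ _
      (hmu i j 1 0 hi hj (by omega) (by omega) (by omega) h1 (by omega) (by omega))
      (hrc _ _) (hccl _ _)
  intro r c hr hc1 hc2
  have hi : r / 2 < m₀ := by omega
  have hj : c / 2 < n₀ := by omega
  rw [muPatE_eq y hi hj, muPatE_eq y' hi hj]
  by_cases hrow : 1 ≤ r
  · by_cases hcol : c ≤ 2*n₀ - 2
    · have h := hag r c hrow hr hc1 hcol
      rw [muPatE_eq y hi hj, muPatE_eq y' hi hj] at h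
      exact h
    · have hc' : c = 2*n₀ - 1 := by omega
      by_cases hpar : r % 2 = 1
      · have hl := hlet (r/2) (c/2) hi hj (by omega) (by omega)
        rw [hl]
      · have hrr : r % 2 = 0 := by omega
        have h00 := hmu (r/2) (c/2) 0 0 hi hj (by omega) (by omega) (by omega) (by omega)
          (by omega) (by omega)
        have hfin := detP1' _ _ h00 (hrc _ _) (hccl _ _)
        simp only [hrr, show c % 2 = 1 by omega]
        exact hfin
  · have hr0 : r = 0 := by omega
    subst hr0
    by_cases hce : c % 2 = 0
    · have hl := hlet (0/2) (c/2) hi hj (by omega) (by omega)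
      rw [hl]
    · by_cases hcl : c₀ ≤ 2*(c/2)
      · have hl := hlet (0/2) (c/2) hi hj (by omega) hcl
        rw [hl]
      · have hcc1 : c = 1 := by omega
        subst hcc1
        have h11 := hmu 0 0 1 1 (by omega) (by omega) (by omega) (by omega) (by omega)
          (by omega) (by omega) (by omega)
        have hfin := detP4' _ _ h11 (hrc _ _) (hccl _ _)
        exact hfin
lemma card_image_eq {α β γ : Type*} (S : Set α) (F : α → β) (G : α → γ)
    (h : ∀ y ∈ S, ∀ y' ∈ S, F y = F y' → G y = G y')
    (h' : ∀ y ∈ S, ∀ y' ∈ S, G y = G y' → F y = F y') :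
    Nat.card (F '' S) = Nat.card (G '' S) := by
  apply Nat.card_congr
  have hF : ∀ w : F '' S, ∃ y, y ∈ S ∧ F y = w.val := fun w => w.2
  have hG : ∀ w : G '' S, ∃ y, y ∈ S ∧ G y = w.val := fun w => w.2
  choose f hf1 hf2 using hF
  choose g hg1 hg2 using hG
  refine ⟨fun w => ⟨G (f w), Set.mem_image_of_mem _ (hf1 w)⟩,
          fun w => ⟨F (g w), Set.mem_image_of_mem _ (hg1 w)⟩, ?_, ?_⟩
  · intro w
    apply Subtype.ext
    have h1 := hg2 ⟨G (f w), Set.mem_image_of_mem _ (hf1 w)⟩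
    have h2 := h' _ (hg1 ⟨G (f w), Set.mem_image_of_mem _ (hf1 w)⟩) _ (hf1 w) h1
    simp only [h2]
    exact hf2 w
  · intro w
    apply Subtype.ext
    have h1 := hf2 ⟨F (g w), Set.mem_image_of_mem _ (hg1 w)⟩
    have h2 := h _ (hf1 ⟨F (g w), Set.mem_image_of_mem _ (hg1 w)⟩) _ (hg1 w) h1
    simp only [h2]
    exact hg2 w

lemma Pij_eq_image (i j m n m₀ n₀ : ℕ)
    (hm₀ : (i - 1 + (m - 1)) / 2 + 1 = m₀) (hn₀ : (j - 1 + (n - 1)) / 2 + 1 = n₀)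
    (hm : m₀ ≤ m) (hn : n₀ ≤ n) (h1m : 1 ≤ m) (h1n : 1 ≤ n) :
    Pij i j m n =
      (fun (y : Pat A16 m₀ n₀) => fun (a : Fin m) (b : Fin n) =>
        muPatE y (i - 1 + a) (j - 1 + b)) '' PT m₀ n₀ := by
  have key : ∀ (a : Fin m), (i - 1 + a) / 2 < m₀ := by
    intro a; have := a.isLt; omega
  have key' : ∀ (b : Fin n), (j - 1 + b) / 2 < n₀ := by
    intro b; have := b.isLt; omega
  ext q
  constructor
  · rintro ⟨x, hx, hq⟩
    refine ⟨fun (a : Fin m₀) (b : Fin n₀) =>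
      x ⟨a, lt_of_lt_of_le a.2 hm⟩ ⟨b, lt_of_lt_of_le b.2 hn⟩, PT_sub hm hn hx, ?_⟩
    funext a b
    simp only []
    rw [muPatE_eq _ (key a) (key' b), hq a b,
      muPatE_eq x (lt_of_lt_of_le (key a) hm) (lt_of_lt_of_le (key' b) hn)]
  · rintro ⟨y, hy, rfl⟩
    obtain ⟨x, hx, hxy⟩ := PT_extend hm hn hy
    refine ⟨x, hx, fun a b => ?_⟩
    simp only []
    rw [muPatE_eq y (key a) (key' b),
      muPatE_eq x (lt_of_lt_of_le (key a) hm) (lt_of_lt_of_le (key' b) hn)]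
    rw [hxy ⟨(i - 1 + ↑a) / 2, key a⟩ ⟨(j - 1 + ↑b) / 2, key' b⟩]

lemma key_lemma {i1 j1 m1 n1 i2 j2 m2 n2 m₀ n₀ c₀ R : ℕ}
    (hm : 2 ≤ m₀) (hn : 2 ≤ n₀) (hc : c₀ ≤ 1) (hR3 : 3 ≤ R) (hRm : R ≤ 2*m₀-1)
    (hanchor : c₀ = 0 ∨ 3 ≤ n₀)
    (hm1 : m₀ ≤ m1) (hn1 : n₀ ≤ n1) (hm2 : m₀ ≤ m2) (hn2 : n₀ ≤ n2)
    (hc1 : (i1 - 1 + (m1 - 1)) / 2 + 1 = m₀) (hd1 : (j1 - 1 + (n1 - 1)) / 2 + 1 = n₀)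
    (hc2 : (i2 - 1 + (m2 - 1)) / 2 + 1 = m₀) (hd2 : (j2 - 1 + (n2 - 1)) / 2 + 1 = n₀)
    (hw1 : i1 - 1 ≤ 1) (hw1' : i1 - 1 + (m1 - 1) = R) (hv1 : j1 - 1 = c₀)
    (hv1' : 2*n₀ - 2 ≤ j1 - 1 + (n1 - 1)) (hv1'' : j1 - 1 + (n1 - 1) ≤ 2*n₀ - 1)
    (hw2 : i2 - 1 ≤ 1) (hw2' : i2 - 1 + (m2 - 1) = R) (hv2 : j2 - 1 = c₀)
    (hv2' : 2*n₀ - 2 ≤ j2 - 1 + (n2 - 1)) (hv2'' : j2 - 1 + (n2 - 1) ≤ 2*n₀ - 1) :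
    Nat.card (Pij i1 j1 m1 n1) = Nat.card (Pij i2 j2 m2 n2) := by
  have h1m1 : 1 ≤ m1 := by omega
  have h1n1 : 1 ≤ n1 := by omega
  have h1m2 : 1 ≤ m2 := by omega
  have h1n2 : 1 ≤ n2 := by omega
  rw [Pij_eq_image i1 j1 m1 n1 m₀ n₀ hc1 hd1 hm1 hn1 h1m1 h1n1,
      Pij_eq_image i2 j2 m2 n2 m₀ n₀ hc2 hd2 hm2 hn2 h1m2 h1n2]
  have main : ∀ (ia ja ma na : ℕ), m₀ ≤ ma → n₀ ≤ na →
      ia - 1 ≤ 1 → ia - 1 + (ma - 1) = R → ja - 1 = c₀ →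
      2*n₀ - 2 ≤ ja - 1 + (na - 1) →
      ∀ (ib jb mb nb : ℕ), m₀ ≤ mb → n₀ ≤ nb →
      ib - 1 + (mb - 1) = R → jb - 1 = c₀ → jb - 1 + (nb - 1) ≤ 2*n₀ - 1 →
      ∀ y ∈ PT m₀ n₀, ∀ y' ∈ PT m₀ n₀,
      (fun (a : Fin ma) (b : Fin na) => muPatE y (ia - 1 + a) (ja - 1 + b)) =
        (fun (a : Fin ma) (b : Fin na) => muPatE y' (ia - 1 + a) (ja - 1 + b)) →
      (fun (a : Fin mb) (b : Fin nb) => muPatE y (ib - 1 + a) (jb - 1 + b)) =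
        (fun (a : Fin mb) (b : Fin nb) => muPatE y' (ib - 1 + a) (jb - 1 + b)) := by
    intro ia ja ma na hma hna ha1 ha2 ha3 ha4 ib jb mb nb hmb hnb hb2 hb3 hb5
      y hy y' hy' hFF
    have hag : ∀ r c : ℕ, 1 ≤ r → r ≤ R → c₀ ≤ c → c ≤ 2 * n₀ - 2 →
        muPatE y r c = muPatE y' r c := by
      intro r c hr1 hr2 hcc1 hcc2
      have hA : r - (ia - 1) < ma := by omega
      have hB : c - (ja - 1) < na := by omega
      have := congrFun (congrFun hFF ⟨r - (ia - 1), hA⟩) ⟨c - (ja - 1), hB⟩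
      simp only at this
      rw [show ia - 1 + (r - (ia - 1)) = r by omega,
          show ja - 1 + (c - (ja - 1)) = c by omega] at this
      exact this
    have hconc := master hm hn hc hR3 hRm hanchor hy hy' hag
    funext a b
    have := a.isLt
    have := b.isLt
    exact hconc (ib - 1 + a) (jb - 1 + b) (by omega) (by omega) (by omega)
  exact card_image_eq _ _ _
    (fun y hy y' hy' => main i1 j1 m1 n1 hm1 hn1 hw1 hw1' hv1 hv1' i2 j2 m2 n2 hm2 hn2
      hw2' hv2 hv2'' y hy y' hy')
    (fun y hy y' hy' => main i2 j2 m2 n2 hm2 hn2 hw2 hw2' hv2 hv2' i1 j1 m1 n1 hm1 hn1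
      hw1' hv1 hv1'' y hy y' hy')

/-- Lemma 4.2: the first list of equalities among a, b, c. -/
theorem first_abc_equalities (n : ℕ) (hn : 2 ≤ n) :
    (aT 1 2 (2 * n) = bT 1 2 (2 * n) ∧ aT 1 2 (2 * n) = bT 2 2 (2 * n - 1)) ∧
    (aT 2 1 (2 * n) = cT 1 1 (2 * n) ∧ aT 2 1 (2 * n) = cT 2 1 (2 * n - 1)) ∧
    (aT 2 2 (2 * n) = aT 1 2 (2 * n + 1) ∧ aT 2 2 (2 * n) = cT 1 2 (2 * n) ∧
      aT 2 2 (2 * n) = bT 2 2 (2 * n)) ∧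
    (aT 1 1 (2 * n + 1) = bT 1 1 (2 * n + 1) ∧
      aT 1 1 (2 * n + 1) = bT 2 1 (2 * n)) ∧
    (aT 2 1 (2 * n + 1) = aT 1 1 (2 * n + 2) ∧
      aT 2 1 (2 * n + 1) = bT 2 1 (2 * n + 1) ∧
      aT 2 1 (2 * n + 1) = cT 1 1 (2 * n + 1)) ∧
    (aT 2 2 (2 * n + 1) = cT 1 2 (2 * n + 1) ∧
      aT 2 2 (2 * n + 1) = cT 2 2 (2 * n)) := by
  unfold aT bT cT
  refine ⟨⟨?_, ?_⟩, ⟨?_, ?_⟩, ⟨?_, ?_, ?_⟩, ⟨?_, ?_⟩, ⟨?_, ?_, ?_⟩, ⟨?_, ?_⟩⟩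
  · apply key_lemma (m₀ := n) (n₀ := n + 1) (c₀ := 1) (R := 2*n - 1) <;> omega
  · apply key_lemma (m₀ := n) (n₀ := n + 1) (c₀ := 1) (R := 2*n - 1) <;> omega
  · apply key_lemma (m₀ := n + 1) (n₀ := n) (c₀ := 0) (R := 2*n) <;> omega
  · apply key_lemma (m₀ := n + 1) (n₀ := n) (c₀ := 0) (R := 2*n) <;> omega
  · apply key_lemma (m₀ := n + 1) (n₀ := n + 1) (c₀ := 1) (R := 2*n) <;> omega
  · apply key_lemma (m₀ := n + 1) (n₀ := n + 1) (c₀ := 1) (R := 2*n) <;> omega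
  · apply key_lemma (m₀ := n + 1) (n₀ := n + 1) (c₀ := 1) (R := 2*n) <;> omega
  · apply key_lemma (m₀ := n + 1) (n₀ := n + 1) (c₀ := 0) (R := 2*n) <;> omega
  · apply key_lemma (m₀ := n + 1) (n₀ := n + 1) (c₀ := 0) (R := 2*n) <;> omega
  · apply key_lemma (m₀ := n + 1) (n₀ := n + 1) (c₀ := 0) (R := 2*n + 1) <;> omega
  · apply key_lemma (m₀ := n + 1) (n₀ := n + 1) (c₀ := 0) (R := 2*n + 1) <;> omega
  · apply key_lemma (m₀ := n + 1) (n₀ := n + 1) (c₀ := 0) (R := 2*n + 1) <;> omega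
  · apply key_lemma (m₀ := n + 1) (n₀ := n + 1) (c₀ := 1) (R := 2*n + 1) <;> omega
  · apply key_lemma (m₀ := n + 1) (n₀ := n + 1) (c₀ := 1) (R := 2*n + 1) <;> omega
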